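/- Let p be a prime and 1 ≤ b ≤ a integers. The p-adic limit as e → ∞ of C(a·p^e, b·p^e) exists in Z_p. -/
import Mathlib

open Polynomial

lemma frob_step (p : ℕ) (hp : p.Prime) :
    (p : ℤ[X]) ∣ (1 + X) ^ p - (1 + X ^ p) := by
  haveI : Fact p.Prime := ⟨hp⟩
  rw [← Polynomial.C_eq_natCast, Polynomial.C_dvd_iff_dvd_coeff]
  intro i
  have hmap : ((1 + X : ℤ[X]) ^ p - (1 + X ^ p)).map (Int.castRingHom (ZMod p)) = 0 := by
    rw [Polynomial.map_sub, Polynomial.map_pow, Polynomial.map_add, Polynomial.map_add,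
      Polynomial.map_one, Polynomial.map_pow, Polynomial.map_X, add_pow_char, one_pow, sub_self]
  have := congrArg (fun f => Polynomial.coeff f i) hmap
  simp only [Polynomial.coeff_map, Polynomial.coeff_zero, Int.coe_castRingHom] at this
  exact_mod_cast (ZMod.intCast_zmod_eq_zero_iff_dvd _ p).mp this

lemma key_dvd (p : ℕ) (hp : p.Prime) (a b e : ℕ) :
    ((p : ℤ) ^ (e + 1)) ∣
      ((a * p ^ (e + 1)).choose (b * p ^ (e + 1)) : ℤ) -
        ((a * p ^ e).choose (b * p ^ e) : ℤ) := by
  have h1 : ((p : ℤ[X]) ^ (e + 1)) ∣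
      ((1 + X) ^ p) ^ p ^ e - (1 + X ^ p) ^ p ^ e := by
    have := dvd_sub_pow_of_dvd_sub (frob_step p hp) e
    simpa using this
  have h2 : ((p : ℤ[X]) ^ (e + 1)) ∣
      (((1 + X) ^ p) ^ p ^ e) ^ a - ((1 + X ^ p) ^ p ^ e) ^ a :=
    h1.trans (sub_dvd_pow_sub_pow _ _ a)
  -- rewrite both sides
  have hA : (((1 + X : ℤ[X]) ^ p) ^ p ^ e) ^ a = (1 + X) ^ (a * p ^ (e + 1)) := by
    rw [← pow_mul, ← pow_mul]; ring_nf
  have hB : ((1 + (X : ℤ[X]) ^ p) ^ p ^ e) ^ a = expand ℤ p ((1 + X) ^ (a * p ^ e)) := by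
    rw [map_pow, map_add, map_one, Polynomial.expand_X, ← pow_mul, mul_comm (p ^ e) a]
  rw [hA, hB] at h2
  -- extract coefficient at b * p^(e+1)
  rw [← Polynomial.C_eq_natCast, ← map_pow, Polynomial.C_dvd_iff_dvd_coeff] at h2
  have h3 := h2 (b * p ^ (e + 1))
  have hc : (b * p ^ (e + 1)) = p * (b * p ^ e) := by ring
  rw [Polynomial.coeff_sub, Polynomial.coeff_one_add_X_pow, hc,
    Polynomial.coeff_expand_mul' hp.pos, Polynomial.coeff_one_add_X_pow] at h3
  rwa [← hc] at h3

theorem stmt9 (p : ℕ) [Fact p.Prime] (a b : ℕ) (hb : 1 ≤ b) (hba : b ≤ a) :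
    ∃ L : ℤ_[p],
      Filter.Tendsto (fun e : ℕ => (((a * p ^ e).choose (b * p ^ e) : ℕ) : ℤ_[p]))
        Filter.atTop (nhds L) := by
  set f : ℕ → ℤ_[p] := fun e => (((a * p ^ e).choose (b * p ^ e) : ℕ) : ℤ_[p]) with hf
  have hp := (Fact.out : p.Prime)
  have hp1 : (1 : ℝ) < p := by exact_mod_cast hp.one_lt
  have hdist : ∀ n : ℕ, dist (f n) (f (n + 1)) ≤ 1 * ((p : ℝ)⁻¹) ^ n := by
    intro n
    have hdvd : ((p : ℤ_[p]) ^ (n + 1)) ∣ f (n + 1) - f n := by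
      have := key_dvd p hp a b n
      have h2 := map_dvd (Int.castRingHom ℤ_[p]) this
      simp only [map_sub, map_pow, Int.coe_castRingHom] at h2
      push_cast at h2 ⊢
      convert h2 using 2
    have hnorm : ‖f (n + 1) - f n‖ ≤ (p : ℝ) ^ (-(n + 1 : ℕ) : ℤ) := by
      rw [PadicInt.norm_le_pow_iff_mem_span_pow, Ideal.mem_span_singleton]
      exact hdvd
    rw [dist_comm, dist_eq_norm]
    calc ‖f (n + 1) - f n‖ ≤ (p : ℝ) ^ (-(n + 1 : ℕ) : ℤ) := hnorm
      _ ≤ (p : ℝ) ^ (-(n : ℤ)) := by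
          apply zpow_le_zpow_right₀ (le_of_lt hp1)
          push_cast; linarith
      _ = 1 * ((p : ℝ)⁻¹) ^ n := by
          rw [one_mul, inv_pow, ← zpow_natCast (p : ℝ), ← zpow_neg]
  have hcauchy : CauchySeq f :=
    cauchySeq_of_le_geometric ((p : ℝ)⁻¹) 1 (inv_lt_one_of_one_lt₀ hp1) hdist
  exact cauchySeq_tendsto_of_complete hcauchy
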